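/- arXiv:1105.1567 — 2 statements merged into one kernel-verified Lean document; each statement's English description precedes it below -/
import Mathlib

section
/- If G₁ and G₂ are connected graphs, each with at least one edge, and both are bipartite, then the Kronecker product G₁ × G₂ is disconnected. -/
open SimpleGraph

/-- The Kronecker (tensor) product of two simple graphs. -/
def tensorProd {α β : Type*} (G : SimpleGraph α) (H : SimpleGraph β) : SimpleGraph (α × β) where
  Adj p q := G.Adj p.1 q.1 ∧ H.Adj p.2 q.2
  symm := ⟨fun p q h => ⟨G.adj_symm h.1, H.adj_symm h.2⟩⟩
  loopless := ⟨fun p h => G.irrefl h.1⟩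

instance {α β : Type*} (G : SimpleGraph α) (H : SimpleGraph β)
    [DecidableRel G.Adj] [DecidableRel H.Adj] : DecidableRel (tensorProd G H).Adj :=
  fun _ _ => instDecidableAnd

/-- `S` is a separating set of `G`: deleting `S` leaves a single vertex or a
disconnected (possibly empty) graph. -/
def IsSeparating {V : Type*} (G : SimpleGraph V) (S : Set V) : Prop :=
  Sᶜ.ncard = 1 ∨ ¬ (G.induce Sᶜ).Connected

/-- The vertex connectivity `κ(G)`: the minimum cardinality of a separating set. -/
noncomputable def kappa {V : Type*} [Fintype V] (G : SimpleGraph V) : ℕ :=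
  sInf {k | ∃ S : Set V, IsSeparating G S ∧ S.ncard = k}

/-- A graph is super-connected (super-κ) if every minimum separating set is the
neighborhood of some vertex. -/
def SuperK {V : Type*} [Fintype V] (G : SimpleGraph V) : Prop :=
  ∀ S : Set V, IsSeparating G S → S.ncard = kappa G → ∃ v, S = G.neighborSet v

lemma walk_inv {V : Type*} {G : SimpleGraph V} (f : V → Fin 2)
    (h : ∀ a b, G.Adj a b → f a = f b) {u v : V} (w : G.Walk u v) : f u = f v := by
  induction w with
  | nil => rfl
  | cons h' _ ih => exact (h _ _ h').trans ih

theorem stmt5 {α β : Type*} [Fintype α] [Fintype β]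
    (G₁ : SimpleGraph α) (G₂ : SimpleGraph β)
    (h₁ : G₁.Connected) (h₂ : G₂.Connected)
    (he₁ : G₁.edgeSet.Nonempty) (he₂ : G₂.edgeSet.Nonempty)
    (hb₁ : G₁.Colorable 2) (hb₂ : G₂.Colorable 2) :
    ¬ (tensorProd G₁ G₂).Connected := by
  obtain ⟨c₁⟩ := hb₁
  obtain ⟨c₂⟩ := hb₂
  obtain ⟨a, b, hab⟩ : ∃ a b, G₁.Adj a b := by
    obtain ⟨e, he⟩ := he₁
    induction e using Sym2.ind with
    | _ a b => exact ⟨a, b, he⟩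
  obtain ⟨y⟩ := h₂.nonempty
  set f : α × β → Fin 2 := fun p => c₁ p.1 + c₂ p.2 with hf
  have hpres : ∀ p q, (tensorProd G₁ G₂).Adj p q → f p = f q := by
    intro p q ⟨hg, hh⟩
    have h1 := c₁.valid hg
    have h2 := c₂.valid hh
    simp only [hf]
    revert h1 h2
    generalize c₁ p.1 = x1; generalize c₁ q.1 = x2
    generalize c₂ p.2 = y1; generalize c₂ q.2 = y2
    revert x1 x2 y1 y2; decide
  intro hconn
  have hr := hconn.preconnected (a, y) (b, y)
  obtain ⟨w⟩ := hr
  have := walk_inv f hpres w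
  have hne := c₁.valid hab
  simp only [hf] at this
  exact hne (by
    have := add_right_cancel this
    exact this)
end

section
/- For any graph G and n ≥ 3, the connectivity of the Kronecker product G × Kₙ equals min{n·κ(G), (n−1)·δ(G)}. -/
open SimpleGraph

lemma not_connected_of_isolated {V : Type*} (G : SimpleGraph V) (v w : V) (hvw : v ≠ w)
    (h : ∀ z, ¬ G.Adj v z) : ¬ G.Connected := by
  intro hc
  obtain ⟨p⟩ := hc.preconnected v w
  cases p with
  | nil => exact hvw rfl
  | cons h' _ => exact h _ h'

lemma not_connected_of_partition {V : Type*} (G : SimpleGraph V) (s A B : Set V)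
    (hs : s ⊆ A ∪ B) (hAB : Disjoint A B)
    (ha : (A ∩ s).Nonempty) (hb : (B ∩ s).Nonempty)
    (hnoedge : ∀ a ∈ A, ∀ b ∈ B, ¬ G.Adj a b) : ¬ (G.induce s).Connected := by
  intro hc
  obtain ⟨a, haA, has⟩ := ha
  obtain ⟨b, hbB, hbs⟩ := hb
  obtain ⟨p⟩ := hc.preconnected ⟨a, has⟩ ⟨b, hbs⟩
  have key : ∀ (x y : ↥s) (_ : (G.induce s).Walk x y), ↑x ∈ A → ↑y ∈ A := by
    intro x y p
    induction p with
    | nil => exact id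
    | @cons x' z' y' h' p ih =>
      intro hx
      apply ih
      have hadj : G.Adj ↑x' ↑z' := h'
      rcases hs z'.2 with hzA | hzB
      · exact hzA
      · exact absurd hadj (hnoedge _ hx _ hzB)
  exact Set.disjoint_left.mp hAB (key _ _ p haA) hbB

lemma exists_partition_of_not_connected {V : Type*} (G : SimpleGraph V) (s : Set V)
    (hne : s.Nonempty) (h : ¬ (G.induce s).Connected) :
    ∃ X Y : Set V, X.Nonempty ∧ Y.Nonempty ∧ X ∪ Y = s ∧ Disjoint X Y ∧
      ∀ a ∈ X, ∀ b ∈ Y, ¬ G.Adj a b := by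
  have hnv : Nonempty ↥s := hne.to_subtype
  rw [connected_iff] at h
  push_neg at h
  obtain ⟨x, y, hxy⟩ : ∃ x y : ↥s, ¬ (G.induce s).Reachable x y := by
    by_contra hall
    push_neg at hall
    exact (h (fun u v => hall u v)).false hnv.some
  refine ⟨{a | ∃ h : a ∈ s, (G.induce s).Reachable x ⟨a, h⟩},
    s \ {a | ∃ h : a ∈ s, (G.induce s).Reachable x ⟨a, h⟩}, ⟨x, x.2, Reachable.refl _⟩,
    ⟨y, y.2, fun hy => ?_⟩, ?_, ?_, ?_⟩
  · obtain ⟨_, hr⟩ := hy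
    exact hxy hr
  · apply Set.union_diff_cancel
    intro a ha
    exact ha.1
  · exact Set.disjoint_sdiff_right
  · intro a ha b hb hadj
    obtain ⟨has, hr⟩ := ha
    exact hb.2 ⟨hb.1, hr.trans (Adj.reachable (by exact hadj))⟩

example (s : Finset ℕ) : (↑s : Set ℕ).ncard = s.card := Set.ncard_coe_finset s

lemma sep_univ {V : Type*} [Fintype V] (G : SimpleGraph V) : IsSeparating G Set.univ := by
  right
  intro hc
  rw [Set.compl_univ] at hc
  have := hc.nonempty
  simp at this

lemma kappa_set_nonempty {V : Type*} [Fintype V] (G : SimpleGraph V) :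
    {k | ∃ S : Set V, IsSeparating G S ∧ S.ncard = k}.Nonempty :=
  ⟨(Set.univ : Set V).ncard, Set.univ, sep_univ G, rfl⟩

lemma kappa_le_of_sep {V : Type*} [Fintype V] (G : SimpleGraph V) {S : Set V}
    (h : IsSeparating G S) : kappa G ≤ S.ncard := Nat.sInf_le ⟨S, h, rfl⟩

lemma kappa_add_one_le {V : Type*} [Fintype V] [Nonempty V] (G : SimpleGraph V) :
    kappa G + 1 ≤ Fintype.card V := by
  obtain ⟨v⟩ := ‹Nonempty V›
  have h1 : IsSeparating G ({v}ᶜ) := by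
    left
    simp [Set.ncard_singleton]
  have := kappa_le_of_sep G h1
  have h2 : ({v}ᶜ : Set V).ncard = Fintype.card V - 1 := by
    rw [Set.compl_eq_univ_diff, Set.ncard_diff (Set.subset_univ {v}), Set.ncard_univ,
      Nat.card_eq_fintype_card, Set.ncard_singleton]
  have h3 : 1 ≤ Fintype.card V := Fintype.card_pos
  omega

section upper
variable {α : Type*} [Fintype α] [Nonempty α] (G : SimpleGraph α) [DecidableRel G.Adj]
  (n : ℕ) (hn : 3 ≤ n)
include hn

omit [Fintype α] [Nonempty α] [DecidableRel G.Adj] hn in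
lemma tensor_adj {p q : α × Fin n} :
    (tensorProd G (⊤ : SimpleGraph (Fin n))).Adj p q ↔ G.Adj p.1 q.1 ∧ p.2 ≠ q.2 := by
  constructor
  · rintro ⟨h1, h2⟩; exact ⟨h1, h2.ne⟩
  · rintro ⟨h1, h2⟩; exact ⟨h1, h2⟩

lemma upper_deg : ∃ S : Set (α × Fin n), IsSeparating (tensorProd G (⊤ : SimpleGraph (Fin n))) S ∧
    S.ncard = (n - 1) * G.minDegree := by
  obtain ⟨u₀, hu₀⟩ := G.exists_minimal_degree_vertex
  set f0 : Fin n := ⟨0, by omega⟩ with hf0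
  set f1 : Fin n := ⟨1, by omega⟩ with hf1
  refine ⟨↑(G.neighborFinset u₀ ×ˢ ({f0}ᶜ : Finset (Fin n))), ?_, ?_⟩
  · right
    have h0 : ((u₀, f0) : α × Fin n) ∈ (↑(G.neighborFinset u₀ ×ˢ ({f0}ᶜ : Finset (Fin n))) : Set (α × Fin n))ᶜ := by simp
    have h1 : ((u₀, f1) : α × Fin n) ∈ (↑(G.neighborFinset u₀ ×ˢ ({f0}ᶜ : Finset (Fin n))) : Set (α × Fin n))ᶜ := by simp
    exact not_connected_of_isolated
      ((tensorProd G (⊤ : SimpleGraph (Fin n))).induce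
        (↑(G.neighborFinset u₀ ×ˢ ({f0}ᶜ : Finset (Fin n))) : Set (α × Fin n))ᶜ)
      ⟨(u₀, f0), h0⟩ ⟨(u₀, f1), h1⟩
      (by
        intro h
        rw [Subtype.mk.injEq, Prod.mk.injEq] at h
        have h01 : f0 ≠ f1 := by
          simp [hf0, hf1, Fin.ext_iff]
        exact h01 h.2)
      (by
        rintro ⟨⟨z1, z2⟩, hz⟩ hadj
        have h2 := (tensor_adj G n).mp hadj
        simp only [Set.mem_compl_iff, Finset.coe_product, Set.mem_prod] at hz
        apply hz
        constructor
        · simp only [Finset.mem_coe, mem_neighborFinset]; exact h2.1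
        · simp only [Finset.coe_compl, Finset.coe_singleton, Set.mem_compl_iff,
            Set.mem_singleton_iff]
          exact fun hh => h2.2 hh.symm)
  · rw [Set.ncard_coe_finset, Finset.card_product, Finset.card_compl, Finset.card_singleton,
      Fintype.card_fin, card_neighborFinset_eq_degree, hu₀, Nat.mul_comm]

lemma upper_kappa : ∃ S : Set (α × Fin n),
    IsSeparating (tensorProd G (⊤ : SimpleGraph (Fin n))) S ∧ S.ncard = n * kappa G := by
  classical
  obtain ⟨S₀, hS₀sep, hS₀card⟩ := Nat.sInf_mem (kappa_set_nonempty G)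
  set f0 : Fin n := ⟨0, by omega⟩ with hf0
  set f1 : Fin n := ⟨1, by omega⟩ with hf1
  set Sf : Finset α := (Set.toFinite S₀).toFinset with hSf
  set C : Set (α × Fin n) := (↑(Sf ×ˢ (Finset.univ : Finset (Fin n))))ᶜ with hC
  have hmemC : ∀ p : α × Fin n, p ∈ C ↔ p.1 ∉ S₀ := by
    intro p
    simp only [hC, hSf, Set.mem_compl_iff, Finset.coe_product, Set.mem_prod, Finset.mem_coe,
      Set.Finite.mem_toFinset, Finset.mem_univ, and_true]
  refine ⟨↑(Sf ×ˢ (Finset.univ : Finset (Fin n))), ?_, ?_⟩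
  · rcases hS₀sep with hs1 | hnc
    · obtain ⟨v, hv⟩ := Set.ncard_eq_one.mp hs1
      have hv' : v ∉ S₀ := by
        have : v ∈ S₀ᶜ := hv ▸ rfl
        exact this
      right
      have h0 : ((v, f0) : α × Fin n) ∈ C := (hmemC _).mpr hv'
      have h1 : ((v, f1) : α × Fin n) ∈ C := (hmemC _).mpr hv'
      exact not_connected_of_isolated
        ((tensorProd G (⊤ : SimpleGraph (Fin n))).induce C) ⟨(v, f0), h0⟩ ⟨(v, f1), h1⟩
        (by
          intro h
          rw [Subtype.mk.injEq, Prod.mk.injEq] at h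
          have h01 : f0 ≠ f1 := by simp [hf0, hf1, Fin.ext_iff]
          exact h01 h.2)
        (by
          rintro ⟨⟨z1, z2⟩, hz⟩ hadj
          have h2 : G.Adj v z1 := hadj.1
          have hz1 : z1 ∉ S₀ := by
            have := (hmemC _).mp hz
            exact this
          have : z1 ∈ S₀ᶜ := hz1
          rw [hv] at this
          rw [this] at h2
          exact G.irrefl h2)
    · by_cases hne : S₀ᶜ.Nonempty
      · have hnv : Nonempty ↥S₀ᶜ := hne.to_subtype
        obtain ⟨x, y, hxy⟩ : ∃ x y : ↥S₀ᶜ, ¬ (G.induce S₀ᶜ).Reachable x y := by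
          by_contra hall
          push_neg at hall
          exact hnc ((connected_iff _).mpr ⟨fun u v => hall u v, hnv⟩)
        right
        intro hc
        have hx' : ((x : α), f0) ∈ C := (hmemC _).mpr x.2
        have hy' : ((y : α), f0) ∈ C := (hmemC _).mpr y.2
        have hr := hc.preconnected ⟨((x : α), f0), hx'⟩ ⟨((y : α), f0), hy'⟩
        let φ : ((tensorProd G (⊤ : SimpleGraph (Fin n))).induce C) →g (G.induce S₀ᶜ) :=
          ⟨fun p => ⟨p.val.1, (hmemC _).mp p.prop⟩, by
            intro a b hab
            exact hab.1⟩
        have := hr.map φ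
        exact hxy this
      · right
        intro hc
        obtain ⟨p⟩ := hc.nonempty
        exact hne ⟨p.val.1, (hmemC _).mp p.prop⟩
  · rw [Set.ncard_coe_finset, Finset.card_product, Finset.card_univ, Fintype.card_fin,
      ← Set.ncard_eq_toFinset_card S₀, hS₀card, Nat.mul_comm]
    rfl
end upper

section lower

open Classical in
noncomputable def fib {α : Type*} (n : ℕ) (T : Set (α × Fin n)) (u : α) : Finset (Fin n) :=
  Finset.univ.filter (fun i => (u, i) ∈ T)

lemma mem_fib {α : Type*} {n : ℕ} {T : Set (α × Fin n)} {u : α} {i : Fin n} :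
    i ∈ fib n T u ↔ (u, i) ∈ T := by
  simp [fib]

lemma sum_fib_eq {α : Type*} [Fintype α] (n : ℕ) (T : Set (α × Fin n)) :
    ∑ u, (fib n T u).card = T.ncard := by
  classical
  rw [Set.ncard_eq_toFinset_card']
  rw [Finset.card_eq_sum_card_fiberwise (f := Prod.fst) (t := Finset.univ)
    (fun x _ => Finset.mem_univ _)]
  apply Finset.sum_congr rfl
  intro u _
  apply Finset.card_bij' (fun i _ => ((u, i) : α × Fin n)) (fun p _ => p.2)
  · intro i hi
    rw [mem_fib] at hi
    simp [hi]
  · intro p hp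
    simp only [Finset.mem_filter, Set.mem_toFinset] at hp
    rw [mem_fib]
    have hep : (u, p.2) = p := by rw [← hp.2]
    rw [hep]
    exact hp.1
  · intro i _
    rfl
  · intro p hp
    simp only [Finset.mem_filter, Set.mem_toFinset] at hp
    rw [← hp.2]

lemma sum_fib_le {α : Type*} [Fintype α] {n : ℕ} (T : Set (α × Fin n)) (U : Finset α) :
    ∑ u ∈ U, (fib n T u).card ≤ T.ncard := by
  rw [← sum_fib_eq n T]
  exact Finset.sum_le_sum_of_subset (Finset.subset_univ U)

lemma fib_card_eq {α : Type*} {n : ℕ} {T X Y : Set (α × Fin n)}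
    (hUnion : X ∪ Y = Tᶜ) (hDisj : Disjoint X Y) (u : α) :
    (fib n X u).card + (fib n Y u).card + (fib n T u).card = n := by
  classical
  have hXY : Disjoint (fib n X u) (fib n Y u) := by
    rw [Finset.disjoint_left]
    intro i hi hi'
    exact Set.disjoint_left.mp hDisj (mem_fib.mp hi) (mem_fib.mp hi')
  have hXT : Disjoint (fib n X u ∪ fib n Y u) (fib n T u) := by
    rw [Finset.disjoint_left]
    intro i hi hi'
    have : (u, i) ∈ X ∪ Y := by
      rcases Finset.mem_union.mp hi with h | h
      · exact Or.inl (mem_fib.mp h)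
      · exact Or.inr (mem_fib.mp h)
    rw [hUnion] at this
    exact this (mem_fib.mp hi')
  have huniv : (fib n X u ∪ fib n Y u) ∪ fib n T u = Finset.univ := by
    ext i
    simp only [Finset.mem_union, mem_fib, Finset.mem_univ, iff_true]
    by_cases h : (u, i) ∈ T
    · exact Or.inr h
    · left
      have : (u, i) ∈ X ∪ Y := by rw [hUnion]; exact h
      rcases this with h' | h'
      · exact Or.inl h'
      · exact Or.inr h'
  have := congrArg Finset.card huniv
  rw [Finset.card_union_of_disjoint hXT, Finset.card_union_of_disjoint hXY,
    Finset.card_univ, Fintype.card_fin] at this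
  exact this

lemma case1aux {α : Type*} [Fintype α] [Nonempty α] (G : SimpleGraph α) [DecidableRel G.Adj]
    (n : ℕ) (T X Y : Set (α × Fin n))
    (hUnion : X ∪ Y = Tᶜ) (hDisj : Disjoint X Y)
    (hE : ∀ a ∈ X, ∀ b ∈ Y, ¬ (tensorProd G (⊤ : SimpleGraph (Fin n))).Adj a b)
    (u : α) (b : Fin n) (hb : (u, b) ∈ Y) (c c' : Fin n) (hcc' : c ≠ c')
    (hc : (u, c) ∈ X) (hc' : (u, c') ∈ X) :
    (n - 1) * G.minDegree ≤ T.ncard := by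
  classical
  have KF : ∀ {v w : α} {i j : Fin n}, G.Adj v w → (v, i) ∈ X → (w, j) ∈ Y → i = j := by
    intro v w i j hvw hx hy
    by_contra hne
    exact hE _ hx _ hy ⟨hvw, hne⟩
  have key : ∀ w ∈ G.neighborFinset u, n - 1 ≤ (fib n T w).card := by
    intro w hw
    rw [mem_neighborFinset] at hw
    have h1 : (fib n X w).card ≤ 1 := by
      apply Finset.card_le_one.mpr
      intro i hi j hj
      rw [KF hw.symm (mem_fib.mp hi) hb, KF hw.symm (mem_fib.mp hj) hb]
    have h2 : (fib n Y w).card = 0 := by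
      rw [Finset.card_eq_zero]
      rw [Finset.eq_empty_iff_forall_notMem]
      intro i hi
      have e1 := KF hw hc (mem_fib.mp hi)
      have e2 := KF hw hc' (mem_fib.mp hi)
      exact hcc' (e1.trans e2.symm)
    have := fib_card_eq hUnion hDisj w
    omega
  calc (n - 1) * G.minDegree ≤ (n - 1) * G.degree u :=
        Nat.mul_le_mul_left _ (G.minDegree_le_degree u)
    _ = ∑ _w ∈ G.neighborFinset u, (n - 1) := by
        rw [Finset.sum_const, smul_eq_mul, card_neighborFinset_eq_degree, mul_comm]
    _ ≤ ∑ w ∈ G.neighborFinset u, (fib n T w).card := Finset.sum_le_sum key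
    _ ≤ T.ncard := sum_fib_le T _

lemma case3aux {α : Type*} [Fintype α] [Nonempty α] (G : SimpleGraph α) [DecidableRel G.Adj]
    (n : ℕ) (T X Y : Set (α × Fin n))
    (hUnion : X ∪ Y = Tᶜ) (hDisj : Disjoint X Y)
    (hE : ∀ a ∈ X, ∀ b ∈ Y, ¬ (tensorProd G (⊤ : SimpleGraph (Fin n))).Adj a b)
    (hD : ∀ u i j, (u, i) ∈ X → (u, j) ∈ Y → False)
    (hA2 : ∀ u i j, (u, i) ∈ X → (u, j) ∈ X → i = j)
    (u : α) (i₀ : Fin n) (hu : (u, i₀) ∈ X) :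
    (n - 1) * G.minDegree ≤ T.ncard := by
  classical
  have KF : ∀ {v w : α} {i j : Fin n}, G.Adj v w → (v, i) ∈ X → (w, j) ∈ Y → i = j := by
    intro v w i j hvw hx hy
    by_contra hne
    exact hE _ hx _ hy ⟨hvw, hne⟩
  have key : ∀ w ∈ G.neighborFinset u, n - 1 ≤ (fib n T w).card := by
    intro w hw
    rw [mem_neighborFinset] at hw
    have h1 : (fib n X w).card ≤ 1 := by
      apply Finset.card_le_one.mpr
      intro i hi j hj
      exact hA2 w i j (mem_fib.mp hi) (mem_fib.mp hj)
    have h2 : (fib n Y w).card ≤ 1 := by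
      apply Finset.card_le_one.mpr
      intro i hi j hj
      rw [← KF hw hu (mem_fib.mp hi), ← KF hw hu (mem_fib.mp hj)]
    have h3 : ¬ ((fib n X w).Nonempty ∧ (fib n Y w).Nonempty) := by
      rintro ⟨⟨i, hi⟩, ⟨j, hj⟩⟩
      exact hD w i j (mem_fib.mp hi) (mem_fib.mp hj)
    have h4 : (fib n X w).card + (fib n Y w).card ≤ 1 := by
      rcases Finset.eq_empty_or_nonempty (fib n X w) with he | hne
      · rw [he]; simpa using h2
      · rcases Finset.eq_empty_or_nonempty (fib n Y w) with he' | hne'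
        · rw [he']; simpa using h1
        · exact absurd ⟨hne, hne'⟩ h3
    have := fib_card_eq hUnion hDisj w
    omega
  calc (n - 1) * G.minDegree ≤ (n - 1) * G.degree u :=
        Nat.mul_le_mul_left _ (G.minDegree_le_degree u)
    _ = ∑ _w ∈ G.neighborFinset u, (n - 1) := by
        rw [Finset.sum_const, smul_eq_mul, card_neighborFinset_eq_degree, mul_comm]
    _ ≤ ∑ w ∈ G.neighborFinset u, (fib n T w).card := Finset.sum_le_sum key
    _ ≤ T.ncard := sum_fib_le T _

/-- membership in the pattern class: the X-part of layer `v` is exactly `{a}` and the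
Y-part exactly `{b}`. -/
def Pm {α : Type*} {n : ℕ} (X Y : Set (α × Fin n)) (a b : Fin n) (v : α) : Prop :=
  (v, a) ∈ X ∧ (v, b) ∈ Y ∧ (∀ i, (v, i) ∈ X → i = a) ∧ (∀ j, (v, j) ∈ Y → j = b)

lemma case2aux {α : Type*} [Fintype α] [Nonempty α] (G : SimpleGraph α) [DecidableRel G.Adj]
    (n : ℕ) (hn : 3 ≤ n) (T X Y : Set (α × Fin n))
    (hUnion : X ∪ Y = Tᶜ) (hDisj : Disjoint X Y)
    (hE : ∀ a ∈ X, ∀ b ∈ Y, ¬ (tensorProd G (⊤ : SimpleGraph (Fin n))).Adj a b)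
    (a b : Fin n) (hab : a ≠ b)
    (hne : ∃ v, Pm X Y a b v ∨ Pm X Y b a v)
    (hcard : {v | Pm X Y a b v}.ncard ≤ {v | Pm X Y b a v}.ncard) :
    (n - 1) * G.minDegree ≤ T.ncard := by
  classical
  have KF : ∀ {v w : α} {i j : Fin n}, G.Adj v w → (v, i) ∈ X → (w, j) ∈ Y → i = j := by
    intro v w i j hvw hx hy
    by_contra hne'
    exact hE _ hx _ hy ⟨hvw, hne'⟩
  set P : Finset α := Finset.univ.filter (fun v => Pm X Y a b v) with hP
  set Q : Finset α := Finset.univ.filter (fun v => Pm X Y b a v) with hQ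
  have memP : ∀ v, v ∈ P ↔ Pm X Y a b v := by intro v; simp [hP]
  have memQ : ∀ v, v ∈ Q ↔ Pm X Y b a v := by intro v; simp [hQ]
  have hPQcard : P.card ≤ Q.card := by
    have e1 : {v | Pm X Y a b v}.ncard = P.card := by
      rw [hP, Set.ncard_eq_toFinset_card', Set.toFinset_setOf]
    have e2 : {v | Pm X Y b a v}.ncard = Q.card := by
      rw [hQ, Set.ncard_eq_toFinset_card', Set.toFinset_setOf]
    rw [e1, e2] at hcard
    exact hcard
  -- Q is nonempty
  have hQne : Q.Nonempty := by
    obtain ⟨v, hv⟩ := hne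
    rcases hv with hv | hv
    · have : v ∈ P := (memP v).mpr hv
      have : 1 ≤ P.card := Finset.card_pos.mpr ⟨v, this⟩
      exact Finset.card_pos.mp (by omega)
    · exact ⟨v, (memQ v).mpr hv⟩
  -- no Q-Q edges
  have hQQ : ∀ v ∈ Q, ∀ w ∈ Q, ¬ G.Adj v w := by
    intro v hv w hw hadj
    have h1 := ((memQ v).mp hv).1
    have h2 := ((memQ w).mp hw).2.1
    exact hab (KF hadj h1 h2).symm
  -- no P-P edges
  have hPP : ∀ v ∈ P, ∀ w ∈ P, ¬ G.Adj v w := by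
    intro v hv w hw hadj
    have h1 := ((memP v).mp hv).1
    have h2 := ((memP w).mp hw).2.1
    exact hab (KF hadj h1 h2)
  have hPQdisj : Disjoint P Q := by
    rw [Finset.disjoint_left]
    intro v hv hv'
    have h1 := ((memP v).mp hv).1
    have h2 := ((memQ v).mp hv').2.2.1 _ h1
    exact hab h2
  set W : Finset α := Finset.univ.filter
    (fun w => w ∉ P ∧ w ∉ Q ∧ ∃ v, (v ∈ P ∨ v ∈ Q) ∧ G.Adj v w) with hW
  have memW : ∀ w, w ∈ W ↔ (w ∉ P ∧ w ∉ Q ∧ ∃ v, (v ∈ P ∨ v ∈ Q) ∧ G.Adj v w) := by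
    intro w; simp [hW]
  -- neighbor structure around P-vertices
  have claimP : ∀ v, Pm X Y a b v → ∀ w, G.Adj v w →
      (∀ i, (w, i) ∈ X → i = b) ∧ (∀ j, (w, j) ∈ Y → j = a) := by
    intro v hv w hadj
    constructor
    · intro i hi
      exact KF hadj.symm hi hv.2.1
    · intro j hj
      exact (KF hadj hv.1 hj).symm
  have claimQ : ∀ v, Pm X Y b a v → ∀ w, G.Adj v w →
      (∀ i, (w, i) ∈ X → i = a) ∧ (∀ j, (w, j) ∈ Y → j = b) := by
    intro v hv w hadj
    constructor
    · intro i hi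
      exact KF hadj.symm hi hv.2.1
    · intro j hj
      exact (KF hadj hv.1 hj).symm
  -- counting bounds
  have boundPQ : ∀ v ∈ P ∪ Q, n - 2 ≤ (fib n T v).card := by
    intro v hv
    have hfx : (fib n X v).card ≤ 1 := by
      apply Finset.card_le_one.mpr
      intro i hi j hj
      rcases Finset.mem_union.mp hv with h | h
      · rw [((memP v).mp h).2.2.1 _ (mem_fib.mp hi), ((memP v).mp h).2.2.1 _ (mem_fib.mp hj)]
      · rw [((memQ v).mp h).2.2.1 _ (mem_fib.mp hi), ((memQ v).mp h).2.2.1 _ (mem_fib.mp hj)]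
    have hfy : (fib n Y v).card ≤ 1 := by
      apply Finset.card_le_one.mpr
      intro i hi j hj
      rcases Finset.mem_union.mp hv with h | h
      · rw [((memP v).mp h).2.2.2 _ (mem_fib.mp hi), ((memP v).mp h).2.2.2 _ (mem_fib.mp hj)]
      · rw [((memQ v).mp h).2.2.2 _ (mem_fib.mp hi), ((memQ v).mp h).2.2.2 _ (mem_fib.mp hj)]
    have := fib_card_eq hUnion hDisj v
    omega
  have boundW : ∀ w ∈ W, n - 1 ≤ (fib n T w).card := by
    intro w hw
    obtain ⟨hwP, hwQ, v, hvPQ, hadj⟩ := (memW w).mp hw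
    have hstruct : (∀ i, (w, i) ∈ X → i = b) ∧ (∀ j, (w, j) ∈ Y → j = a) ∨
        (∀ i, (w, i) ∈ X → i = a) ∧ (∀ j, (w, j) ∈ Y → j = b) := by
      rcases hvPQ with h | h
      · exact Or.inl (claimP v ((memP v).mp h) w hadj)
      · exact Or.inr (claimQ v ((memQ v).mp h) w hadj)
    have hone : (fib n X w).card + (fib n Y w).card ≤ 1 := by
      rcases hstruct with ⟨hx, hy⟩ | ⟨hx, hy⟩
      · -- if both nonempty, w ∈ Q
        by_cases hbx : (fib n X w).Nonempty
        · by_cases hby : (fib n Y w).Nonempty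
          · exfalso
            obtain ⟨i, hi⟩ := hbx
            obtain ⟨j, hj⟩ := hby
            have hiX : (w, b) ∈ X := by rw [← hx i (mem_fib.mp hi)]; exact mem_fib.mp hi
            have hjY : (w, a) ∈ Y := by rw [← hy j (mem_fib.mp hj)]; exact mem_fib.mp hj
            exact hwQ ((memQ w).mpr ⟨hiX, hjY, hx, hy⟩)
          · rw [Finset.not_nonempty_iff_eq_empty] at hby
            rw [hby]
            have : (fib n X w).card ≤ 1 := Finset.card_le_one.mpr
              (fun i hi j hj => by rw [hx i (mem_fib.mp hi), hx j (mem_fib.mp hj)])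
            simpa using this
        · rw [Finset.not_nonempty_iff_eq_empty] at hbx
          rw [hbx]
          have : (fib n Y w).card ≤ 1 := Finset.card_le_one.mpr
            (fun i hi j hj => by rw [hy i (mem_fib.mp hi), hy j (mem_fib.mp hj)])
          simpa using this
      · by_cases hbx : (fib n X w).Nonempty
        · by_cases hby : (fib n Y w).Nonempty
          · exfalso
            obtain ⟨i, hi⟩ := hbx
            obtain ⟨j, hj⟩ := hby
            have hiX : (w, a) ∈ X := by rw [← hx i (mem_fib.mp hi)]; exact mem_fib.mp hi
            have hjY : (w, b) ∈ Y := by rw [← hy j (mem_fib.mp hj)]; exact mem_fib.mp hj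
            exact hwP ((memP w).mpr ⟨hiX, hjY, hx, hy⟩)
          · rw [Finset.not_nonempty_iff_eq_empty] at hby
            rw [hby]
            have : (fib n X w).card ≤ 1 := Finset.card_le_one.mpr
              (fun i hi j hj => by rw [hx i (mem_fib.mp hi), hx j (mem_fib.mp hj)])
            simpa using this
        · rw [Finset.not_nonempty_iff_eq_empty] at hbx
          rw [hbx]
          have : (fib n Y w).card ≤ 1 := Finset.card_le_one.mpr
            (fun i hi j hj => by rw [hy i (mem_fib.mp hi), hy j (mem_fib.mp hj)])
          simpa using this
    have := fib_card_eq hUnion hDisj w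
    omega
  -- the degree bound
  obtain ⟨q, hq⟩ := hQne
  have hNq : G.neighborFinset q ⊆ P ∪ W := by
    intro w hw
    rw [mem_neighborFinset] at hw
    by_cases hwP : w ∈ P
    · exact Finset.mem_union_left _ hwP
    · by_cases hwQ : w ∈ Q
      · exact absurd hw (hQQ q hq w hwQ)
      · exact Finset.mem_union_right _ ((memW w).mpr ⟨hwP, hwQ, q, Or.inr hq, hw⟩)
  have hdeg : G.degree q ≤ P.card + W.card := by
    calc G.degree q = (G.neighborFinset q).card := (card_neighborFinset_eq_degree G q).symm
      _ ≤ (P ∪ W).card := Finset.card_le_card hNq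
      _ ≤ P.card + W.card := Finset.card_union_le _ _
  -- disjointness of P, Q, W
  have hWPQ : Disjoint W (P ∪ Q) := by
    rw [Finset.disjoint_left]
    intro w hw hw'
    obtain ⟨h1, h2, _⟩ := (memW w).mp hw
    rcases Finset.mem_union.mp hw' with h | h
    · exact h1 h
    · exact h2 h
  -- total count
  have htotal : (n - 2) * (P.card + Q.card) + (n - 1) * W.card ≤ T.ncard := by
    have hsum : ∑ v ∈ (P ∪ Q) ∪ W, (fib n T v).card ≤ T.ncard := sum_fib_le T _
    rw [Finset.sum_union hWPQ.symm, Finset.sum_union hPQdisj] at hsum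
    have e1 : (n - 2) * P.card ≤ ∑ v ∈ P, (fib n T v).card := by
      calc (n - 2) * P.card = ∑ _v ∈ P, (n - 2) := by rw [Finset.sum_const, smul_eq_mul, mul_comm]
        _ ≤ _ := Finset.sum_le_sum (fun v hv => boundPQ v (Finset.mem_union_left _ hv))
    have e2 : (n - 2) * Q.card ≤ ∑ v ∈ Q, (fib n T v).card := by
      calc (n - 2) * Q.card = ∑ _v ∈ Q, (n - 2) := by rw [Finset.sum_const, smul_eq_mul, mul_comm]
        _ ≤ _ := Finset.sum_le_sum (fun v hv => boundPQ v (Finset.mem_union_right _ hv))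
    have e3 : (n - 1) * W.card ≤ ∑ v ∈ W, (fib n T v).card := by
      calc (n - 1) * W.card = ∑ _v ∈ W, (n - 1) := by rw [Finset.sum_const, smul_eq_mul, mul_comm]
        _ ≤ _ := Finset.sum_le_sum boundW
    have := Nat.mul_add (n - 2) P.card Q.card
    omega
  -- final arithmetic
  have hmain : (n - 1) * (P.card + W.card) ≤ (n - 2) * (P.card + Q.card) + (n - 1) * W.card := by
    have h1 : (n - 1) * P.card ≤ (n - 2) * (P.card + Q.card) := by
      calc (n - 1) * P.card ≤ ((n - 2) + (n - 2)) * P.card :=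
            Nat.mul_le_mul_right _ (by omega)
        _ = (n - 2) * (P.card + P.card) := by ring
        _ ≤ (n - 2) * (P.card + Q.card) := Nat.mul_le_mul_left _ (by omega)
    have := Nat.mul_add (n - 1) P.card W.card
    omega
  calc (n - 1) * G.minDegree ≤ (n - 1) * G.degree q :=
        Nat.mul_le_mul_left _ (G.minDegree_le_degree q)
    _ ≤ (n - 1) * (P.card + W.card) := Nat.mul_le_mul_left _ hdeg
    _ ≤ (n - 2) * (P.card + Q.card) + (n - 1) * W.card := hmain
    _ ≤ T.ncard := htotal

lemma sep_pair {α : Type*} [Fintype α] (G : SimpleGraph α) (A B : Finset α)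
    (hA : A.Nonempty) (hB : B.Nonempty) (hAB : Disjoint A B)
    (hnoedge : ∀ a ∈ A, ∀ b ∈ B, ¬ G.Adj a b) :
    kappa G + A.card + B.card ≤ Fintype.card α := by
  classical
  obtain ⟨a, ha⟩ := hA
  obtain ⟨b, hb⟩ := hB
  set C : Set α := (↑(A ∪ B))ᶜ with hC
  have hsep : IsSeparating G C := by
    right
    have hcc : Cᶜ = (↑(A ∪ B) : Set α) := compl_compl _
    rw [hcc]
    apply not_connected_of_partition G _ ↑A ↑B
    · rw [Finset.coe_union]
    · exact Finset.disjoint_coe.mpr hAB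
    · exact ⟨a, ha, by simp [ha]⟩
    · exact ⟨b, hb, by simp [hb]⟩
    · intro x hx y hy
      exact hnoedge x hx y hy
  have h1 := kappa_le_of_sep G hsep
  have h2 : (↑(A ∪ B) : Set α).ncard + C.ncard = Fintype.card α := by
    rw [hC]
    rw [Set.ncard_add_ncard_compl]
    rw [Nat.card_eq_fintype_card]
  have h3 : (↑(A ∪ B) : Set α).ncard = A.card + B.card := by
    rw [Set.ncard_coe_finset, Finset.card_union_of_disjoint hAB]
  omega

lemma case3both {α : Type*} [Fintype α] [Nonempty α] (G : SimpleGraph α) [DecidableRel G.Adj]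
    (n : ℕ) (hn : 3 ≤ n) (T X Y : Set (α × Fin n))
    (hX : X.Nonempty) (hY : Y.Nonempty)
    (hUnion : X ∪ Y = Tᶜ) (hDisj : Disjoint X Y)
    (hE : ∀ a ∈ X, ∀ b ∈ Y, ¬ (tensorProd G (⊤ : SimpleGraph (Fin n))).Adj a b)
    (hD : ∀ u i j, (u, i) ∈ X → (u, j) ∈ Y → False)
    (hA2e : ∃ u c c', c ≠ c' ∧ (u, c) ∈ X ∧ (u, c') ∈ X)
    (hB2e : ∃ u c c', c ≠ c' ∧ (u, c) ∈ Y ∧ (u, c') ∈ Y) :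
    n * kappa G ≤ T.ncard := by
  classical
  have KF : ∀ {v w : α} {i j : Fin n}, G.Adj v w → (v, i) ∈ X → (w, j) ∈ Y → i = j := by
    intro v w i j hvw hx hy
    by_contra hne'
    exact hE _ hx _ hy ⟨hvw, hne'⟩
  set A' : Finset α := Finset.univ.filter (fun v => ∃ i, (v, i) ∈ X) with hA'
  set B' : Finset α := Finset.univ.filter (fun v => ∃ i, (v, i) ∈ Y) with hB'
  set A2 : Finset α := Finset.univ.filter (fun v => ∃ c c', c ≠ c' ∧ (v, c) ∈ X ∧ (v, c') ∈ X)
    with hA2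
  set B2 : Finset α := Finset.univ.filter (fun v => ∃ c c', c ≠ c' ∧ (v, c) ∈ Y ∧ (v, c') ∈ Y)
    with hB2
  have memA' : ∀ v, v ∈ A' ↔ ∃ i, (v, i) ∈ X := by intro v; simp [hA']
  have memB' : ∀ v, v ∈ B' ↔ ∃ i, (v, i) ∈ Y := by intro v; simp [hB']
  have memA2 : ∀ v, v ∈ A2 ↔ ∃ c c', c ≠ c' ∧ (v, c) ∈ X ∧ (v, c') ∈ X := by
    intro v; simp [hA2]
  have memB2 : ∀ v, v ∈ B2 ↔ ∃ c c', c ≠ c' ∧ (v, c) ∈ Y ∧ (v, c') ∈ Y := by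
    intro v; simp [hB2]
  have hA2sub : A2 ⊆ A' := by
    intro v hv
    obtain ⟨c, c', _, h1, _⟩ := (memA2 v).mp hv
    exact (memA' v).mpr ⟨c, h1⟩
  have hB2sub : B2 ⊆ B' := by
    intro v hv
    obtain ⟨c, c', _, h1, _⟩ := (memB2 v).mp hv
    exact (memB' v).mpr ⟨c, h1⟩
  have hA'B' : Disjoint A' B' := by
    rw [Finset.disjoint_left]
    intro v hv hv'
    obtain ⟨i, hi⟩ := (memA' v).mp hv
    obtain ⟨j, hj⟩ := (memB' v).mp hv'
    exact hD v i j hi hj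
  -- no edges between A2 and B'
  have hA2B' : ∀ v ∈ A2, ∀ w ∈ B', ¬ G.Adj v w := by
    intro v hv w hw hadj
    obtain ⟨c, c', hcc', h1, h2⟩ := (memA2 v).mp hv
    obtain ⟨j, hj⟩ := (memB' w).mp hw
    exact hcc' ((KF hadj h1 hj).trans (KF hadj h2 hj).symm)
  have hB2A' : ∀ v ∈ A', ∀ w ∈ B2, ¬ G.Adj v w := by
    intro v hv w hw hadj
    obtain ⟨c, c', hcc', h1, h2⟩ := (memB2 w).mp hw
    obtain ⟨i, hi⟩ := (memA' v).mp hv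
    exact hcc' ((KF hadj hi h1).symm.trans (KF hadj hi h2))
  -- the two cuts
  have hA2ne : A2.Nonempty := by
    obtain ⟨u, c, c', h1, h2, h3⟩ := hA2e
    exact ⟨u, (memA2 u).mpr ⟨c, c', h1, h2, h3⟩⟩
  have hB2ne : B2.Nonempty := by
    obtain ⟨u, c, c', h1, h2, h3⟩ := hB2e
    exact ⟨u, (memB2 u).mpr ⟨c, c', h1, h2, h3⟩⟩
  have hA'ne : A'.Nonempty := by
    obtain ⟨⟨v, i⟩, hv⟩ := hX
    exact ⟨v, (memA' v).mpr ⟨i, hv⟩⟩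
  have hB'ne : B'.Nonempty := by
    obtain ⟨⟨v, i⟩, hv⟩ := hY
    exact ⟨v, (memB' v).mpr ⟨i, hv⟩⟩
  have cut1 : kappa G + A2.card + B'.card ≤ Fintype.card α :=
    sep_pair G A2 B' hA2ne hB'ne
      (Finset.disjoint_of_subset_left hA2sub hA'B') hA2B'
  have cut2 : kappa G + A'.card + B2.card ≤ Fintype.card α :=
    sep_pair G A' B2 hA'ne hB2ne
      (Finset.disjoint_of_subset_right hB2sub hA'B') hB2A'
  -- counting
  set S : Finset α := Finset.univ \ (A' ∪ B') with hS
  set A1 : Finset α := A' \ A2 with hA1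
  set B1 : Finset α := B' \ B2 with hB1
  have boundS : ∀ v ∈ S, n ≤ (fib n T v).card := by
    intro v hv
    rw [hS, Finset.mem_sdiff, Finset.mem_union] at hv
    have hfx : fib n X v = ∅ := by
      rw [Finset.eq_empty_iff_forall_notMem]
      intro i hi
      exact hv.2 (Or.inl ((memA' v).mpr ⟨i, mem_fib.mp hi⟩))
    have hfy : fib n Y v = ∅ := by
      rw [Finset.eq_empty_iff_forall_notMem]
      intro i hi
      exact hv.2 (Or.inr ((memB' v).mpr ⟨i, mem_fib.mp hi⟩))
    have := fib_card_eq hUnion hDisj v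
    rw [hfx, hfy] at this
    simp at this
    omega
  have boundA1 : ∀ v ∈ A1, n - 1 ≤ (fib n T v).card := by
    intro v hv
    rw [hA1, Finset.mem_sdiff] at hv
    have hfx : (fib n X v).card ≤ 1 := by
      apply Finset.card_le_one.mpr
      intro i hi j hj
      by_contra hij
      exact hv.2 ((memA2 v).mpr ⟨i, j, hij, mem_fib.mp hi, mem_fib.mp hj⟩)
    have hfy : fib n Y v = ∅ := by
      rw [Finset.eq_empty_iff_forall_notMem]
      intro j hj
      obtain ⟨i, hi⟩ := (memA' v).mp hv.1
      exact hD v i j hi (mem_fib.mp hj)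
    have := fib_card_eq hUnion hDisj v
    rw [hfy] at this
    simp at this
    omega
  have boundB1 : ∀ v ∈ B1, n - 1 ≤ (fib n T v).card := by
    intro v hv
    rw [hB1, Finset.mem_sdiff] at hv
    have hfy : (fib n Y v).card ≤ 1 := by
      apply Finset.card_le_one.mpr
      intro i hi j hj
      by_contra hij
      exact hv.2 ((memB2 v).mpr ⟨i, j, hij, mem_fib.mp hi, mem_fib.mp hj⟩)
    have hfx : fib n X v = ∅ := by
      rw [Finset.eq_empty_iff_forall_notMem]
      intro j hj
      obtain ⟨i, hi⟩ := (memB' v).mp hv.1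
      exact hD v j i (mem_fib.mp hj) hi
    have := fib_card_eq hUnion hDisj v
    rw [hfx] at this
    simp at this
    omega
  -- disjointness for the sum
  have d1 : Disjoint A1 B1 :=
    Finset.disjoint_of_subset_left (Finset.sdiff_subset)
      (Finset.disjoint_of_subset_right (Finset.sdiff_subset) hA'B')
  have d2 : Disjoint S (A1 ∪ B1) := by
    rw [Finset.disjoint_left]
    intro v hv hv'
    rw [hS, Finset.mem_sdiff, Finset.mem_union] at hv
    rcases Finset.mem_union.mp hv' with h | h
    · exact hv.2 (Or.inl (Finset.sdiff_subset (hA1 ▸ h)))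
    · exact hv.2 (Or.inr (Finset.sdiff_subset (hB1 ▸ h)))
  have htotal : n * S.card + (n - 1) * A1.card + (n - 1) * B1.card ≤ T.ncard := by
    have hsum : ∑ v ∈ S ∪ (A1 ∪ B1), (fib n T v).card ≤ T.ncard := sum_fib_le T _
    rw [Finset.sum_union d2, Finset.sum_union d1] at hsum
    have e1 : n * S.card ≤ ∑ v ∈ S, (fib n T v).card := by
      calc n * S.card = ∑ _v ∈ S, n := by rw [Finset.sum_const, smul_eq_mul, mul_comm]
        _ ≤ _ := Finset.sum_le_sum boundS
    have e2 : (n - 1) * A1.card ≤ ∑ v ∈ A1, (fib n T v).card := by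
      calc (n - 1) * A1.card = ∑ _v ∈ A1, (n - 1) := by
            rw [Finset.sum_const, smul_eq_mul, mul_comm]
        _ ≤ _ := Finset.sum_le_sum boundA1
    have e3 : (n - 1) * B1.card ≤ ∑ v ∈ B1, (fib n T v).card := by
      calc (n - 1) * B1.card = ∑ _v ∈ B1, (n - 1) := by
            rw [Finset.sum_const, smul_eq_mul, mul_comm]
        _ ≤ _ := Finset.sum_le_sum boundB1
    omega
  -- relate cardinalities
  have hcover : S.card + (A'.card + B'.card) = Fintype.card α := by
    rw [hS]
    rw [Finset.card_sdiff_of_subset (Finset.subset_univ _), Finset.card_union_of_disjoint hA'B',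
      Finset.card_univ]
    have : A'.card + B'.card ≤ Fintype.card α := by
      rw [← Finset.card_union_of_disjoint hA'B', ← Finset.card_univ]
      exact Finset.card_le_card (Finset.subset_univ _)
    omega
  have hA1card : A1.card + A2.card = A'.card := by
    rw [hA1, Finset.card_sdiff_of_subset hA2sub]
    have := Finset.card_le_card hA2sub
    omega
  have hB1card : B1.card + B2.card = B'.card := by
    rw [hB1, Finset.card_sdiff_of_subset hB2sub]
    have := Finset.card_le_card hB2sub
    omega
  -- linear conclusion: kappa ≤ S.card + A1.card and kappa ≤ S.card + B1.card
  have key1 : kappa G ≤ S.card + A1.card := by omega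
  have key2 : kappa G ≤ S.card + B1.card := by omega
  -- final arithmetic
  rcases Nat.le_total (kappa G) S.card with h | h
  · calc n * kappa G ≤ n * S.card := Nat.mul_le_mul_left _ h
      _ ≤ _ := by omega
  · obtain ⟨d, hd⟩ : ∃ d, kappa G = S.card + d := ⟨kappa G - S.card, by omega⟩
    have hda : d ≤ A1.card := by omega
    have hdb : d ≤ B1.card := by omega
    have hfin : n * kappa G ≤ n * S.card + (n - 1) * A1.card + (n - 1) * B1.card := by
      have e1 : (n - 1) * d ≤ (n - 1) * A1.card := Nat.mul_le_mul_left _ hda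
      have e2 : (n - 1) * d ≤ (n - 1) * B1.card := Nat.mul_le_mul_left _ hdb
      have e3 : n * kappa G = n * S.card + n * d := by rw [hd, Nat.mul_add]
      have e4 : n * d ≤ (n - 1) * d + (n - 1) * d := by
        calc n * d ≤ ((n - 1) + (n - 1)) * d := Nat.mul_le_mul_right _ (by omega)
          _ = (n - 1) * d + (n - 1) * d := Nat.add_mul _ _ _
      omega
    omega

lemma core {α : Type*} [Fintype α] [Nonempty α] (G : SimpleGraph α) [DecidableRel G.Adj]
    (n : ℕ) (hn : 3 ≤ n) (T X Y : Set (α × Fin n))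
    (hX : X.Nonempty) (hY : Y.Nonempty)
    (hUnion : X ∪ Y = Tᶜ) (hDisj : Disjoint X Y)
    (hE : ∀ a ∈ X, ∀ b ∈ Y, ¬ (tensorProd G (⊤ : SimpleGraph (Fin n))).Adj a b) :
    min (n * kappa G) ((n - 1) * G.minDegree) ≤ T.ncard := by
  classical
  by_cases hD : ∃ u i j, (u, i) ∈ X ∧ (u, j) ∈ Y
  · obtain ⟨u, i, j, hx, hy⟩ := hD
    by_cases h2 : ∃ c c', c ≠ c' ∧ (u, c) ∈ X ∧ (u, c') ∈ X
    · obtain ⟨c, c', hcc', hc, hc'⟩ := h2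
      exact le_trans (min_le_right _ _)
        (case1aux G n T X Y hUnion hDisj hE u j hy c c' hcc' hc hc')
    · by_cases h3 : ∃ c c', c ≠ c' ∧ (u, c) ∈ Y ∧ (u, c') ∈ Y
      · obtain ⟨c, c', hcc', hc, hc'⟩ := h3
        refine le_trans (min_le_right _ _)
          (case1aux G n T Y X ?_ hDisj.symm ?_ u i hx c c' hcc' hc hc')
        · rw [Set.union_comm]; exact hUnion
        · intro p hp q hq hadj; exact hE q hq p hp hadj.symm
      · have hXs : ∀ k, (u, k) ∈ X → k = i := by
          intro k hk
          by_contra hki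
          exact h2 ⟨k, i, hki, hk, hx⟩
        have hYs : ∀ k, (u, k) ∈ Y → k = j := by
          intro k hk
          by_contra hkj
          exact h3 ⟨k, j, hkj, hk, hy⟩
        have hPm : Pm X Y i j u := ⟨hx, hy, hXs, hYs⟩
        have hij : i ≠ j := by
          intro h
          exact Set.disjoint_left.mp hDisj hx (h ▸ hy)
        rcases Nat.le_total ({v | Pm X Y i j v}.ncard) ({v | Pm X Y j i v}.ncard) with hle | hle
        · exact le_trans (min_le_right _ _)
            (case2aux G n hn T X Y hUnion hDisj hE i j hij ⟨u, Or.inl hPm⟩ hle)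
        · exact le_trans (min_le_right _ _)
            (case2aux G n hn T X Y hUnion hDisj hE j i hij.symm ⟨u, Or.inr hPm⟩ hle)
  · have hD' : ∀ u i j, (u, i) ∈ X → (u, j) ∈ Y → False := by
      intro u i j hx hy; exact hD ⟨u, i, j, hx, hy⟩
    by_cases hA2e : ∃ u c c', c ≠ c' ∧ (u, c) ∈ X ∧ (u, c') ∈ X
    · by_cases hB2e : ∃ u c c', c ≠ c' ∧ (u, c) ∈ Y ∧ (u, c') ∈ Y
      · exact le_trans (min_le_left _ _)
          (case3both G n hn T X Y hX hY hUnion hDisj hE hD' hA2e hB2e)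
      · have hB1 : ∀ u i j, (u, i) ∈ Y → (u, j) ∈ Y → i = j := by
          intro u i j hi hj; by_contra hij; exact hB2e ⟨u, i, j, hij, hi, hj⟩
        obtain ⟨⟨v, i⟩, hv⟩ := hY
        refine le_trans (min_le_right _ _)
          (case3aux G n T Y X ?_ hDisj.symm ?_ ?_ hB1 v i hv)
        · rw [Set.union_comm]; exact hUnion
        · intro p hp q hq hadj; exact hE q hq p hp hadj.symm
        · intro w a b hyw hxw; exact hD' w b a hxw hyw
    · have hA1 : ∀ u i j, (u, i) ∈ X → (u, j) ∈ X → i = j := by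
        intro u i j hi hj; by_contra hij; exact hA2e ⟨u, i, j, hij, hi, hj⟩
      obtain ⟨⟨v, i⟩, hv⟩ := hX
      exact le_trans (min_le_right _ _)
        (case3aux G n T X Y hUnion hDisj hE hD' hA1 v i hv)

lemma lowerBound {α : Type*} [Fintype α] [Nonempty α] (G : SimpleGraph α) [DecidableRel G.Adj]
    (n : ℕ) (hn : 3 ≤ n) (S : Set (α × Fin n))
    (hsep : IsSeparating (tensorProd G (⊤ : SimpleGraph (Fin n))) S) :
    min (n * kappa G) ((n - 1) * G.minDegree) ≤ S.ncard := by
  classical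
  have hk1 : kappa G + 1 ≤ Fintype.card α := kappa_add_one_le G
  have hcard : Fintype.card (α × Fin n) = Fintype.card α * n := by simp
  have hcompl : S.ncard + Sᶜ.ncard = Fintype.card α * n := by
    rw [Set.ncard_add_ncard_compl, Nat.card_eq_fintype_card, hcard]
  have hknk : n * kappa G + n ≤ n * Fintype.card α := by
    calc n * kappa G + n = n * (kappa G + 1) := by ring
      _ ≤ n * Fintype.card α := Nat.mul_le_mul_left _ hk1
  have hmulc : n * Fintype.card α = Fintype.card α * n := Nat.mul_comm _ _
  rcases hsep with h1 | h2
  · apply le_trans (min_le_left _ _)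
    omega
  · by_cases hne : Sᶜ.Nonempty
    · obtain ⟨X, Y, hX, hY, hU, hd, hEdge⟩ :=
        exists_partition_of_not_connected _ _ hne h2
      exact core G n hn S X Y hX hY hU hd hEdge
    · rw [Set.not_nonempty_iff_eq_empty] at hne
      rw [hne, Set.ncard_empty] at hcompl
      apply le_trans (min_le_left _ _)
      omega

end lower

theorem stmt7 {α : Type*} [Fintype α] [Nonempty α] (G : SimpleGraph α) [DecidableRel G.Adj]
    (n : ℕ) (hn : 3 ≤ n) :
    kappa (tensorProd G (⊤ : SimpleGraph (Fin n))) =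
      min (n * kappa G) ((n - 1) * G.minDegree) := by
  classical
  apply le_antisymm
  · rcases Nat.le_total (n * kappa G) ((n - 1) * G.minDegree) with h | h
    · rw [min_eq_left h]
      obtain ⟨S, hS, hc⟩ := upper_kappa G n hn
      rw [← hc]
      exact kappa_le_of_sep _ hS
    · rw [min_eq_right h]
      obtain ⟨S, hS, hc⟩ := upper_deg G n hn
      rw [← hc]
      exact kappa_le_of_sep _ hS
  · obtain ⟨S, hS, hc⟩ :=
      Nat.sInf_mem (kappa_set_nonempty (tensorProd G (⊤ : SimpleGraph (Fin n))))
    have hlow := lowerBound G n hn S hS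
    have hkapeq : kappa (tensorProd G (⊤ : SimpleGraph (Fin n))) = S.ncard := hc.symm
    rw [hkapeq]
    exact hlow
end
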